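/- arXiv:1403.0461 — 2 statements merged into one kernel-verified Lean document; each statement's English description precedes it below -/
import Mathlib

section
/- In a c-semiring where × is idempotent, a × b is the greatest lower bound of {a, b} with respect to the order a ≤ b iff a + b = b. -/
structure CSemiring (A : Type*) where
  add : A → A → A
  mul : A → A → A
  zero : A
  one : A
  add_comm : ∀ a b, add a b = add b a
  add_assoc : ∀ a b c, add (add a b) c = add a (add b c)
  add_idem : ∀ a, add a a = a
  add_zero : ∀ a, add a zero = a
  add_one : ∀ a, add a one = one
  mul_comm : ∀ a b, mul a b = mul b a
  mul_assoc : ∀ a b c, mul (mul a b) c = mul a (mul b c)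
  mul_one : ∀ a, mul a one = a
  mul_zero : ∀ a, mul a zero = zero
  left_distrib : ∀ a b c, mul a (add b c) = add (mul a b) (mul a c)

/-- The induced order: `a ≤ b` iff `a + b = b`. -/
def CSemiring.le {A : Type*} (S : CSemiring A) (a b : A) : Prop := S.add a b = b

/-- In a c-semiring with idempotent `×`, `a × b` is the greatest lower bound of `{a, b}`. -/
theorem csemiring_mul_glb {A : Type*} (S : CSemiring A)
    (hmul_idem : ∀ a : A, S.mul a a = a) (a b : A) :
    S.le (S.mul a b) a ∧ S.le (S.mul a b) b ∧
      ∀ c : A, S.le c a → S.le c b → S.le c (S.mul a b) := by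
  have key : ∀ x y : A, S.add (S.mul x y) x = x := by
    intro x y
    calc S.add (S.mul x y) x = S.add x (S.mul x y) := S.add_comm _ _
      _ = S.add (S.mul x S.one) (S.mul x y) := by rw [S.mul_one]
      _ = S.mul x (S.add S.one y) := (S.left_distrib _ _ _).symm
      _ = S.mul x S.one := by rw [S.add_comm, S.add_one]
      _ = x := S.mul_one x
  refine ⟨key a b, by rw [S.mul_comm]; exact key b a, ?_⟩
  intro c hca hcb
  have mulc : ∀ x : A, S.add c x = x → S.mul c x = c := by
    intro x hx
    have : S.mul c x = S.add c (S.mul c x) := by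
      conv_lhs => rw [← hx, S.left_distrib, hmul_idem]
    rw [this]
    calc S.add c (S.mul c x) = S.add (S.mul c S.one) (S.mul c x) := by rw [S.mul_one]
      _ = S.mul c (S.add S.one x) := (S.left_distrib _ _ _).symm
      _ = c := by rw [S.add_comm, S.add_one, S.mul_one]
  show S.add c (S.mul a b) = S.mul a b
  calc S.add c (S.mul a b) = S.add (S.mul c b) (S.mul a b) := by rw [mulc b hcb]
    _ = S.add (S.mul b c) (S.mul b a) := by rw [S.mul_comm c b, S.mul_comm a b]
    _ = S.mul b (S.add c a) := (S.left_distrib _ _ _).symm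
    _ = S.mul a b := by rw [hca, S.mul_comm]
end

section
/- For distinct variables x, y, z with x ≠ y, x ≠ z, and y ≠ z, the cylindric identity d_{xy} = ∃_z (d_{xz} ⊗ d_{zy}) holds for diagonal soft constraints over a finite nonempty domain, assuming × is such that 1 × 1 = 1 and a × 0 = 0. -/
def SoftConstraint (V D A : Type*) := (V → D) → A

def cle {V D A : Type*} (S : CSemiring A) (c₁ c₂ : SoftConstraint V D A) : Prop :=
  ∀ η : V → D, S.le (c₁ η) (c₂ η)

/-- The hiding operator: `(∃ₓ c) η = Σ_{d ∈ D} c (η[x := d])`. -/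
noncomputable def hide {V D A : Type*} [DecidableEq V] [Fintype D] (S : CSemiring A) (x : V)
    (c : SoftConstraint V D A) : SoftConstraint V D A :=
  fun η =>
    ((Finset.univ : Finset D).toList.map (fun d => c (Function.update η x d))).foldr
      S.add S.zero

def comb {V D A : Type*} (S : CSemiring A) (c₁ c₂ : SoftConstraint V D A) :
    SoftConstraint V D A := fun η => S.mul (c₁ η) (c₂ η)

def diag {V D A : Type*} [DecidableEq D] (S : CSemiring A) (x y : V) :
    SoftConstraint V D A := fun η => if η x = η y then S.one else S.zero

lemma fold_zero {D A : Type*} (S : CSemiring A) (l : List D) (f : D → A)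
    (h : ∀ d ∈ l, f d = S.zero) : (l.map f).foldr S.add S.zero = S.zero := by
  induction l with
  | nil => rfl
  | cons b l ih =>
    simp only [List.map_cons, List.foldr_cons, h b (by simp),
      ih (fun d hd => h d (List.mem_cons_of_mem _ hd))]
    exact S.add_zero _

lemma fold_single {D A : Type*} (S : CSemiring A) (l : List D) (f : D → A) (a : D)
    (ha : a ∈ l) (hn : l.Nodup)
    (hz : ∀ d ∈ l, d ≠ a → f d = S.zero) : (l.map f).foldr S.add S.zero = f a := by
  induction l with
  | nil => cases ha
  | cons b l ih =>
    rcases List.mem_cons.mp ha with rfl | ha'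
    · have : (l.map f).foldr S.add S.zero = S.zero := by
        apply fold_zero
        intro d hd
        exact hz d (List.mem_cons_of_mem _ hd) (fun h => (List.nodup_cons.mp hn).1 (h ▸ hd))
      simp only [List.map_cons, List.foldr_cons, this]
      exact S.add_zero _
    · have hba : b ≠ a := fun h => (List.nodup_cons.mp hn).1 (h ▸ ha')
      simp only [List.map_cons, List.foldr_cons, hz b (by simp) hba,
        ih ha' (List.nodup_cons.mp hn).2 (fun d hd => hz d (List.mem_cons_of_mem _ hd))]
      rw [S.add_comm]; exact S.add_zero _

/-- The cylindric identity `d_{xy} = ∃_z (d_{xz} ⊗ d_{zy})` for pairwise distinct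
variables over a finite nonempty domain. -/
theorem diag_cylindric {V D A : Type*} [DecidableEq V] [DecidableEq D] [Fintype D]
    [Nonempty D] (S : CSemiring A) (x y z : V)
    (hxy : x ≠ y) (hxz : x ≠ z) (hyz : y ≠ z) :
    (diag S x y : SoftConstraint V D A) = hide S z (comb S (diag S x z) (diag S z y)) := by
  funext η
  have hup : ∀ d : D, Function.update η z d x = η x := fun d => Function.update_of_ne hxz _ _
  have hup' : ∀ d : D, Function.update η z d y = η y := fun d => Function.update_of_ne hyz _ _
  have hupz : ∀ d : D, Function.update η z d z = d := fun d => Function.update_self _ _ _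
  simp only [hide, comb, diag, hup, hup', hupz]
  by_cases h : η x = η y
  · rw [if_pos h, fold_single S _ _ (η x) (by simp) (Finset.nodup_toList _)]
    · rw [if_pos rfl, if_pos h, S.mul_one]
    · intro d _ hd
      rw [if_neg (fun h' => hd h'.symm), S.mul_comm, S.mul_zero]
  · rw [if_neg h, fold_zero]
    intro d _
    by_cases hdx : η x = d
    · rw [← hdx, if_neg h, S.mul_zero]
    · rw [if_neg hdx, S.mul_comm, S.mul_zero]
end
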